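/- Let q be a prime power, k, d positive integers, K = F_{q^{kd}}, h₀, h₁ ∈ F_{q^k}[X] coprime of degree at most 2, and Q ∈ K[X] an irreducible quadratic polynomial with K[X]-basis (1, u₀X + u₁), (X, v₀X + v₁) of the lattice L_Q. Let a, a' ∈ K with a ≠ a', and set b = u₀a + v₀, c = u₁a + v₁, b' = u₀a' + v₀, c' = u₁a' + v₁. If X^{q+1} + aX^q + bX + c splits completely into linear factors over K, then the polynomials X^{q+1} + aX^q + bX + c and X^{q+1} + a'X^q + b'X + c' have no common root in an algebraic closure of K. -/

import Mathlib

open Polynomial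

/-- Proposition 7 (first part): for two distinct solutions `a ≠ a'`, the polynomials
`𝒫_a mod f₁ = X^{q+1} + aX^q + bX + c` and `𝒫_{a'} mod f₁ = X^{q+1} + a'X^q + b'X + c'`
have no common root in an algebraic closure of `K`. -/
theorem stmt_7 (q k d : ℕ) (hq : IsPrimePow q) (hk : 0 < k) (hd : 0 < d)
    (F0 : Type) [Field F0] [Fintype F0] (hF0 : Fintype.card F0 = q ^ k)
    (K : Type) [Field K] [Fintype K] (hK : Fintype.card K = q ^ (k * d))
    (f : F0 →+* K)
    (h₀ h₁ : F0[X]) (hcop : IsCoprime h₀ h₁)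
    (hdeg0 : h₀.natDegree ≤ 2) (hdeg1 : h₁.natDegree ≤ 2)
    (Q : K[X]) (hQirr : Irreducible Q) (hQdeg : Q.natDegree = 2)
    (u₀ u₁ v₀ v₁ : K)
    -- the pairs `(1, u₀X + u₁)` and `(X, v₀X + v₁)` form a `K[X]`-basis of
    -- the lattice `L_Q = {(w₀, w₁) : Q ∣ w₀h₀ + w₁h₁}`
    (hbasis : ∀ w : K[X] × K[X],
      Q ∣ w.1 * h₀.map f + w.2 * h₁.map f ↔
      ∃ r s : K[X], w.1 = r + s * X ∧
        w.2 = r * (C u₀ * X + C u₁) + s * (C v₀ * X + C v₁))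
    (a a' : K) (haa : a ≠ a')
    (hsplit : Splits
      (X ^ (q + 1) + C a * X ^ q + C (u₀ * a + v₀) * X + C (u₁ * a + v₁))) :
    ∀ τ : AlgebraicClosure K,
      ¬ (Polynomial.aeval τ
            (X ^ (q + 1) + C a * X ^ q + C (u₀ * a + v₀) * X + C (u₁ * a + v₁) : K[X]) = 0 ∧
         Polynomial.aeval τ
            (X ^ (q + 1) + C a' * X ^ q + C (u₀ * a' + v₀) * X + C (u₁ * a' + v₁) : K[X]) = 0) := by
  rintro τ ⟨h1, h2⟩
  have hq2 : 2 ≤ q := hq.two_le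
  set φ := algebraMap K (AlgebraicClosure K) with hφ
  have hinj : Function.Injective φ := φ.injective
  have h1' := h1
  have h2' := h2
  simp only [map_add, map_mul, map_pow, aeval_X, aeval_C] at h1' h2'
  have hne : φ a - φ a' ≠ 0 := by
    intro h
    exact haa (hinj (by rwa [sub_eq_zero] at h))
  have hE0 : (φ a - φ a') * (τ ^ q + φ u₀ * τ + φ u₁) = 0 := by
    linear_combination h1' - h2'
  have hE : τ ^ q + φ u₀ * τ + φ u₁ = 0 := (mul_eq_zero.mp hE0).resolve_left hne
  have hP : φ v₁ + (φ v₀ - φ u₁) * τ - φ u₀ * τ ^ 2 = 0 := by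
    linear_combination h1' - (τ + φ a) * hE
  -- lattice step: (Q, 0) is in the lattice
  have hdvd : Q ∣ (Q, (0 : K[X])).1 * h₀.map f + (Q, (0 : K[X])).2 * h₁.map f := by
    simp only [zero_mul, add_zero]
    exact dvd_mul_right _ _
  obtain ⟨r, s, hr1, hr2⟩ := (hbasis (Q, 0)).mp hdvd
  simp only at hr1 hr2
  have hkey : (C u₀ * X + C u₁) * Q = s * (C u₀ * X ^ 2 + (C u₁ - C v₀) * X - C v₁) := by
    linear_combination (C u₀ * X + C u₁) * hr1 - hr2
  have hkeyτ := congrArg (aeval τ) hkey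
  simp only [map_mul, map_add, map_sub, map_pow, aeval_X, aeval_C] at hkeyτ
  have hz : φ u₀ * τ ^ 2 + (φ u₁ - φ v₀) * τ - φ v₁ = 0 := by linear_combination -hP
  rw [hz, mul_zero] at hkeyτ
  by_cases hτ : τ = 0
  · -- then u₁ = 0 and v₁ = 0, and X divides Q, contradiction
    subst hτ
    have hu1 : u₁ = 0 := by
      apply hinj; rw [map_zero]
      have h0 : (0 : AlgebraicClosure K) ^ q = 0 := zero_pow (by omega)
      linear_combination hE - h0
    have hv1 : v₁ = 0 := by
      apply hinj; rw [map_zero]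
      linear_combination hP
    subst hu1; subst hv1
    have hdvd2 : Q ∣ ((0 : K[X]), Q).1 * h₀.map f + ((0 : K[X]), Q).2 * h₁.map f := by
      simp only [zero_mul, zero_add]
      exact dvd_mul_right _ _
    obtain ⟨r', s', hr1', hr2'⟩ := (hbasis (0, Q)).mp hdvd2
    simp only [map_zero, add_zero] at hr1' hr2'
    have hXdvd : X ∣ Q := ⟨r' * C u₀ + s' * C v₀, by linear_combination hr2'⟩
    obtain ⟨g, hg⟩ := hXdvd
    rcases hQirr.isUnit_or_isUnit hg with h | h
    · exact Polynomial.not_isUnit_X h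
    · have hg0 : g ≠ 0 := by
        rintro rfl
        rw [mul_zero] at hg
        exact hQirr.ne_zero hg
      have : Q.natDegree = 1 := by
        rw [hg, natDegree_mul X_ne_zero hg0, natDegree_X,
          Polynomial.natDegree_eq_zero_of_isUnit h]
      omega
  · have hfac : φ u₀ * τ + φ u₁ ≠ 0 := by
      intro h
      apply hτ
      have hτq : τ ^ q = 0 := by linear_combination hE - h
      exact pow_eq_zero_iff (by omega : q ≠ 0) |>.mp hτq
    have hQτ : aeval τ Q = 0 := by
      rcases mul_eq_zero.mp hkeyτ with h | h
      · exact absurd h hfac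
      · exact h
    have hint : IsIntegral K τ := Algebra.IsIntegral.isIntegral τ
    have hmirr : Irreducible (minpoly K τ) := minpoly.irreducible hint
    have hmin_dvd_Q : minpoly K τ ∣ Q := minpoly.dvd K τ hQτ
    have hassoc : Associated (minpoly K τ) Q :=
      hmirr.associated_of_dvd hQirr hmin_dvd_Q
    have hQdeg' : Q.degree = 2 := by
      rw [Polynomial.degree_eq_natDegree hQirr.ne_zero, hQdeg]; rfl
    have hdeg2 : (minpoly K τ).degree = 2 :=
      (Polynomial.degree_eq_degree_of_associated hassoc).trans hQdeg'
    -- the first polynomial is monic hence nonzero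
    have hmon : (X ^ (q + 1) + C a * X ^ q + C (u₀ * a + v₀) * X
        + C (u₁ * a + v₁) : K[X]).Monic := by
      monicity!
      intro h
      omega
    have hmin_dvd_P : minpoly K τ ∣
        (X ^ (q + 1) + C a * X ^ q + C (u₀ * a + v₀) * X + C (u₁ * a + v₁) : K[X]) :=
      minpoly.dvd K τ h1
    have hsplitmin : Splits (minpoly K τ) :=
      hsplit.of_dvd hmon.ne_zero hmin_dvd_P
    have hdeg1' : (minpoly K τ).degree = 1 :=
      hsplitmin.degree_eq_one_of_irreducible hmirr
    rw [hdeg1'] at hdeg2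
    exact absurd hdeg2 (by norm_num)
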